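/- Let A be an L×N complex matrix satisfying the restricted isometry property of order 2s with constant δ₂ₛᴬ, let V be an N×N diagonal matrix with at most s nonzero diagonal entries, let G be an N×N complex matrix, let M ≥ 1, and set g = ‖VG‖₂ (spectral norm). Assume Σ_{j=1}^M gʲ ≤ 1. Then for every s-sparse x ∈ ℂ^N, (1 − δ₂ₛᴬ)(1 − Σ_{j=1}^M gʲ)² ‖x‖₂² ≤ ‖ A ( Σ_{j=0}^M (VG)ʲ ) x ‖₂² ≤ (1 + δ₂ₛᴬ)(1 + Σ_{j=1}^M gʲ)² ‖x‖₂². -/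

import Mathlib

open Matrix Finset Filter

noncomputable section

/-- A vector is `s`-sparse if it has at most `s` nonzero entries. -/
def sparse {n : Type*} (s : ℕ) (x : n → ℂ) : Prop := {i | x i ≠ 0}.ncard ≤ s

/-- The ℓ² norm of the `j`-th column of a matrix. -/
def colNorm {m n : Type*} [Fintype m] (A : Matrix m n ℂ) (j : n) : ℝ :=
  Real.sqrt (∑ i, ‖A i j‖ ^ 2)

/-- The mutual coherence of a matrix:
`μ(A) = max_{j ≠ k} |⟨A_j, A_k⟩| / (‖A_j‖₂ ‖A_k‖₂)`. -/
def coherence {m n : Type*} [Fintype m] [Fintype n] (A : Matrix m n ℂ) : ℝ :=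
  sSup {r : ℝ | ∃ j k, j ≠ k ∧ r = ‖(Aᴴ * A) j k‖ / (colNorm A j * colNorm A k)}

/-- The ℓ¹ norm of a vector. -/
def l1 {n : Type*} [Fintype n] (x : n → ℂ) : ℝ := ∑ i, ‖x i‖

/-- The ℓ^∞ norm of a vector. -/
def linf {n : Type*} [Fintype n] (x : n → ℂ) : ℝ := ⨆ i, ‖x i‖

/-- The squared ℓ² norm of a vector. -/
def l2sq {n : Type*} [Fintype n] (x : n → ℂ) : ℝ := ∑ i, ‖x i‖ ^ 2

/-- The entrywise max norm of a matrix, `‖M‖_max = max_{i,j} |M_{ij}|`. -/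
def maxNorm {m n : Type*} [Fintype m] [Fintype n] (A : Matrix m n ℂ) : ℝ :=
  ⨆ p : m × n, ‖A p.1 p.2‖

/-- The induced ℓ¹ matrix norm (maximum absolute column sum). -/
def matL1 {m n : Type*} [Fintype m] [Fintype n] (A : Matrix m n ℂ) : ℝ :=
  ⨆ j, ∑ i, ‖A i j‖

/-- `x` is a hard thresholding `H_s(z)` of `z`: it agrees with `z` on an
index set `I` of size `s` consisting of entries of largest modulus, and
vanishes outside `I`. -/
def IsHardThreshold {n : Type*} [Fintype n] (s : ℕ) (z x : n → ℂ) : Prop :=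
  ∃ I : Finset n, I.card = s ∧ (∀ i ∈ I, ∀ j ∉ I, ‖z j‖ ≤ ‖z i‖) ∧
    (∀ i ∈ I, x i = z i) ∧ (∀ i ∉ I, x i = 0)

/-- `A` satisfies the restricted isometry property of order `t` with constant `δ`. -/
def SatisfiesRIP {m n : Type*} [Fintype m] [Fintype n] (A : Matrix m n ℂ) (t : ℕ) (δ : ℝ) :
    Prop :=
  0 < δ ∧ δ < 1 ∧ ∀ z : n → ℂ, sparse t z →
    (1 - δ) * l2sq z ≤ l2sq (A.mulVec z) ∧ l2sq (A.mulVec z) ≤ (1 + δ) * l2sq z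

/-- The spectral (operator ℓ²) norm of a square matrix. -/
def specNorm {n : Type*} [Fintype n] [DecidableEq n] (M : Matrix n n ℂ) : ℝ :=
  ‖Matrix.toEuclideanCLM (𝕜 := ℂ) M‖


lemma l2sq_eq_norm_sq {N : ℕ} (x : Fin N → ℂ) :
    l2sq x = ‖(WithLp.equiv 2 (Fin N → ℂ)).symm x‖ ^ 2 := by
  rw [EuclideanSpace.norm_eq, Real.sq_sqrt (by positivity)]
  simp [l2sq, WithLp.equiv_symm_apply]

/-- Equation (B.7): RIP-type bounds for the M-th order Born linearization. -/
theorem RIP_Mth_Born_linearization {L N : ℕ} (s : ℕ)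
    (A : Matrix (Fin L) (Fin N) ℂ)
    (δA : ℝ) (hRIP : SatisfiesRIP A (2 * s) δA)
    (v : Fin N → ℂ) (hv : sparse s v)
    (G : Matrix (Fin N) (Fin N) ℂ)
    (M : ℕ) (hM : 1 ≤ M)
    (g : ℝ) (hg : g = specNorm (Matrix.diagonal v * G))
    (hsum : ∑ j ∈ Finset.Icc 1 M, g ^ j ≤ 1) :
    ∀ x : Fin N → ℂ, sparse s x →
      (1 - δA) * (1 - ∑ j ∈ Finset.Icc 1 M, g ^ j) ^ 2 * l2sq x ≤
        l2sq ((A * ∑ j ∈ Finset.range (M + 1),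
          (Matrix.diagonal v * G) ^ j).mulVec x) ∧
      l2sq ((A * ∑ j ∈ Finset.range (M + 1),
          (Matrix.diagonal v * G) ^ j).mulVec x) ≤
        (1 + δA) * (1 + ∑ j ∈ Finset.Icc 1 M, g ^ j) ^ 2 * l2sq x := by
  obtain ⟨hδ0, hδ1, hR⟩ := hRIP
  set P : Matrix (Fin N) (Fin N) ℂ := Matrix.diagonal v * G with hP
  set C : Matrix (Fin N) (Fin N) ℂ := ∑ j ∈ Finset.Icc 1 M, P ^ j with hC
  set S : ℝ := ∑ j ∈ Finset.Icc 1 M, g ^ j with hSdef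
  have hg0 : 0 ≤ g := hg ▸ norm_nonneg _
  have hS0 : 0 ≤ S := Finset.sum_nonneg fun j _ => pow_nonneg hg0 j
  -- decomposition of B
  have hrange : Finset.range (M + 1) = insert 0 (Finset.Icc 1 M) := by
    ext j; simp [Finset.mem_range, Finset.mem_Icc, Nat.lt_succ_iff]; omega
  have hB : ∑ j ∈ Finset.range (M + 1), P ^ j = 1 + C := by
    rw [hrange, Finset.sum_insert (by simp)]
    simp [hC]
  -- spectral norm bound of C
  have hCnorm : ‖Matrix.toEuclideanCLM (𝕜 := ℂ) C‖ ≤ S := by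
    rw [hC, map_sum]
    refine (norm_sum_le _ _).trans (Finset.sum_le_sum fun j hj => ?_)
    rw [map_pow]
    have hj1 : 0 < j := (Finset.mem_Icc.mp hj).1
    refine (norm_pow_le' _ hj1).trans ?_
    exact pow_le_pow_left₀ (norm_nonneg _) (le_of_eq (hg).symm) j
  -- entries of C vanish where v vanishes
  have hCzero : ∀ i, v i = 0 → ∀ k, C i k = 0 := by
    intro i hvi k
    rw [hC, Matrix.sum_apply]
    refine Finset.sum_eq_zero fun j hj => ?_
    obtain ⟨j', rfl⟩ := Nat.exists_eq_add_of_lt (Finset.mem_Icc.mp hj).1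
    simp only [zero_add]
    rw [pow_succ', hP, Matrix.mul_assoc]
    simp [Matrix.mul_apply, Matrix.diagonal_apply, hvi]
  intro x hx
  set z : Fin N → ℂ := (∑ j ∈ Finset.range (M + 1), P ^ j).mulVec x with hz
  have hzx : z = x + C.mulVec x := by
    rw [hz, hB, Matrix.add_mulVec, Matrix.one_mulVec]
  -- sparsity of z
  have hzsp : sparse (2 * s) z := by
    have hsub : {i | z i ≠ 0} ⊆ {i | x i ≠ 0} ∪ {i | v i ≠ 0} := by
      intro i hi
      by_contra hcon
      simp only [Set.mem_union, Set.mem_setOf_eq, not_or, not_not] at hcon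
      apply hi
      rw [hzx]
      have : C.mulVec x i = 0 := by
        rw [Matrix.mulVec, dotProduct]
        exact Finset.sum_eq_zero fun k _ => by rw [hCzero i hcon.2 k, zero_mul]
      simp [Pi.add_apply, hcon.1, this]
    calc {i | z i ≠ 0}.ncard ≤ ({i | x i ≠ 0} ∪ {i | v i ≠ 0}).ncard :=
          Set.ncard_le_ncard hsub (Set.toFinite _)
      _ ≤ {i | x i ≠ 0}.ncard + {i | v i ≠ 0}.ncard :=
          Set.ncard_union_le _ _
      _ ≤ s + s := add_le_add hx hv
      _ = 2 * s := (two_mul s).symm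
  -- Euclidean reformulation
  set y : EuclideanSpace ℂ (Fin N) := (WithLp.equiv 2 (Fin N → ℂ)).symm x with hy
  have hTy : (WithLp.equiv 2 (Fin N → ℂ)).symm z =
      y + Matrix.toEuclideanCLM (𝕜 := ℂ) C y := by
    rw [hy, WithLp.equiv_symm_apply, Matrix.toEuclideanCLM_toLp, hzx]
    rfl
  have hCy : ‖Matrix.toEuclideanCLM (𝕜 := ℂ) C y‖ ≤ S * ‖y‖ :=
    ((Matrix.toEuclideanCLM (𝕜 := ℂ) C).le_opNorm y).trans
      (mul_le_mul_of_nonneg_right hCnorm (norm_nonneg _))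
  have hup : ‖(WithLp.equiv 2 (Fin N → ℂ)).symm z‖ ≤ (1 + S) * ‖y‖ := by
    rw [hTy]
    calc ‖y + _‖ ≤ ‖y‖ + ‖Matrix.toEuclideanCLM (𝕜 := ℂ) C y‖ := norm_add_le _ _
      _ ≤ ‖y‖ + S * ‖y‖ := by linarith
      _ = (1 + S) * ‖y‖ := by ring
  have hlo : (1 - S) * ‖y‖ ≤ ‖(WithLp.equiv 2 (Fin N → ℂ)).symm z‖ := by
    rw [hTy]
    have h3 : ‖y‖ ≤ ‖y + Matrix.toEuclideanCLM (𝕜 := ℂ) C y‖ +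
        ‖Matrix.toEuclideanCLM (𝕜 := ℂ) C y‖ := by
      simpa using norm_add_le (y + Matrix.toEuclideanCLM (𝕜 := ℂ) C y)
        (-(Matrix.toEuclideanCLM (𝕜 := ℂ) C y))
    have h2 : (1 - S) * ‖y‖ = ‖y‖ - S * ‖y‖ := by ring
    linarith
  have hlo0 : 0 ≤ (1 - S) * ‖y‖ := mul_nonneg (by linarith) (norm_nonneg _)
  -- squared bounds
  have hzsq : l2sq z = ‖(WithLp.equiv 2 (Fin N → ℂ)).symm z‖ ^ 2 := l2sq_eq_norm_sq z
  have hxsq : l2sq x = ‖y‖ ^ 2 := l2sq_eq_norm_sq x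
  have hupsq : l2sq z ≤ (1 + S) ^ 2 * l2sq x := by
    rw [hzsq, hxsq]
    calc ‖(WithLp.equiv 2 (Fin N → ℂ)).symm z‖ ^ 2 ≤ ((1 + S) * ‖y‖) ^ 2 :=
          pow_le_pow_left₀ (norm_nonneg _) hup 2
      _ = (1 + S) ^ 2 * ‖y‖ ^ 2 := by ring
  have hlosq : (1 - S) ^ 2 * l2sq x ≤ l2sq z := by
    rw [hzsq, hxsq]
    calc (1 - S) ^ 2 * ‖y‖ ^ 2 = ((1 - S) * ‖y‖) ^ 2 := by ring
      _ ≤ ‖(WithLp.equiv 2 (Fin N → ℂ)).symm z‖ ^ 2 := pow_le_pow_left₀ hlo0 hlo 2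
  -- apply RIP
  obtain ⟨hR1, hR2⟩ := hR z hzsp
  have hAB : (A * ∑ j ∈ Finset.range (M + 1), P ^ j).mulVec x = A.mulVec z := by
    rw [hz, Matrix.mulVec_mulVec]
  have hz0 : 0 ≤ l2sq z := Finset.sum_nonneg fun i _ => by positivity
  constructor
  · rw [hAB]
    calc (1 - δA) * (1 - S) ^ 2 * l2sq x = (1 - δA) * ((1 - S) ^ 2 * l2sq x) := by ring
      _ ≤ (1 - δA) * l2sq z := mul_le_mul_of_nonneg_left hlosq (by linarith)
      _ ≤ l2sq (A.mulVec z) := hR1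
  · rw [hAB]
    calc l2sq (A.mulVec z) ≤ (1 + δA) * l2sq z := hR2
      _ ≤ (1 + δA) * ((1 + S) ^ 2 * l2sq x) :=
          mul_le_mul_of_nonneg_left hupsq (by linarith)
      _ = (1 + δA) * (1 + S) ^ 2 * l2sq x := by ring

end
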